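/- Let κ₁, κ₂ be real wavenumbers with 0 < κ₁ < κ₂, and let α ∈ ℝ with |α| < κ₁. Set Δⱼ := (κⱼ² − α²)^{1/2} for j = 1, 2. Let ζ ∈ ℂ with Re ζ > 0, Im ζ > 0, and e^{Δ₁ Im ζ} ≥ 3. Define, for j = 1, 2, δⱼ := (e^{iΔ₂ζ} − e^{iΔ₁ζ})/(e^{−iΔⱼζ} − e^{iΔⱼζ}) (the denominators are nonzero), set χ := α² + Δ₁Δ₂ and χ̂ := χ + 4(δ₂ − δ₁ − δ₁δ₂) α² Δ₁Δ₂ / χ. Then |χ̂ − χ| ≤ 24 Δ₁Δ₂ / (e^{Δ₁ Im ζ} − 1). -/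

import Mathlib

set_option maxHeartbeats 800000


/-- Estimate of `|χ̂ − χ|` for a mode propagating for both the compressional
and shear waves (case (i) in the proof of Proposition A.4). -/
theorem chi_hat_sub_chi_estimate
    (κ₁ κ₂ α : ℝ) (hκ₁ : 0 < κ₁) (hκ₁₂ : κ₁ < κ₂) (hα : |α| < κ₁)
    (Δ₁ Δ₂ : ℝ)
    (hΔ₁ : Δ₁ = Real.sqrt (κ₁ ^ 2 - α ^ 2))
    (hΔ₂ : Δ₂ = Real.sqrt (κ₂ ^ 2 - α ^ 2))
    (ζ : ℂ) (hζre : 0 < ζ.re) (hζim : 0 < ζ.im)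
    (hbig : 3 ≤ Real.exp (Δ₁ * ζ.im))
    (δ₁ δ₂ : ℂ)
    (hδ₁ : δ₁ = (Complex.exp (Complex.I * (Δ₂ : ℂ) * ζ) - Complex.exp (Complex.I * (Δ₁ : ℂ) * ζ)) /
      (Complex.exp (-(Complex.I * (Δ₁ : ℂ) * ζ)) - Complex.exp (Complex.I * (Δ₁ : ℂ) * ζ)))
    (hδ₂ : δ₂ = (Complex.exp (Complex.I * (Δ₂ : ℂ) * ζ) - Complex.exp (Complex.I * (Δ₁ : ℂ) * ζ)) /
      (Complex.exp (-(Complex.I * (Δ₂ : ℂ) * ζ)) - Complex.exp (Complex.I * (Δ₂ : ℂ) * ζ)))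
    (χ : ℝ) (hχ : χ = α ^ 2 + Δ₁ * Δ₂)
    (χhat : ℂ)
    (hχhat : χhat = (χ : ℂ) +
      4 * (δ₂ - δ₁ - δ₁ * δ₂) * (α : ℂ) ^ 2 * (Δ₁ : ℂ) * (Δ₂ : ℂ) / (χ : ℂ)) :
    ‖χhat - (χ : ℂ)‖ ≤ 24 * Δ₁ * Δ₂ / (Real.exp (Δ₁ * ζ.im) - 1) := by
  have hα2 : α ^ 2 < κ₁ ^ 2 := by
    have := abs_lt.mp hα
    nlinarith [this.1, this.2]
  have hΔ1pos : 0 < Δ₁ := by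
    rw [hΔ₁]; exact Real.sqrt_pos.mpr (by linarith)
  have hΔ12 : Δ₁ ≤ Δ₂ := by
    rw [hΔ₁, hΔ₂]; exact Real.sqrt_le_sqrt (by nlinarith)
  have hΔ2pos : 0 < Δ₂ := lt_of_lt_of_le hΔ1pos hΔ12
  have hχpos : 0 < χ := by rw [hχ]; positivity
  -- abs of exponentials
  have habs1 : ∀ Δ : ℝ, ‖Complex.exp (Complex.I * (Δ : ℂ) * ζ)‖
      = Real.exp (-(Δ * ζ.im)) := by
    intro Δ
    rw [Complex.norm_exp]
    congr 1
    simp [Complex.mul_re, Complex.mul_im]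
  have habs2 : ∀ Δ : ℝ, ‖Complex.exp (-(Complex.I * (Δ : ℂ) * ζ))‖
      = Real.exp (Δ * ζ.im) := by
    intro Δ
    rw [Complex.norm_exp]
    congr 1
    simp [Complex.mul_re, Complex.mul_im]
  set E := Real.exp (Δ₁ * ζ.im) with hE
  have hE1 : (2:ℝ) ≤ E - 1 := by linarith
  -- numerator bound
  have hnum : ‖Complex.exp (Complex.I * (Δ₂ : ℂ) * ζ)
      - Complex.exp (Complex.I * (Δ₁ : ℂ) * ζ)‖ ≤ 2 := by
    refine (norm_sub_le _ _).trans ?_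
    rw [habs1, habs1]
    have h1 : Real.exp (-(Δ₁ * ζ.im)) ≤ 1 := Real.exp_le_one_iff.mpr (by nlinarith)
    have h2 : Real.exp (-(Δ₂ * ζ.im)) ≤ 1 := Real.exp_le_one_iff.mpr (by nlinarith)
    linarith
  -- denominator bound
  have hden : ∀ Δ : ℝ, 0 < Δ → Real.exp (Δ * ζ.im) - 1 ≤
      ‖Complex.exp (-(Complex.I * (Δ : ℂ) * ζ))
        - Complex.exp (Complex.I * (Δ : ℂ) * ζ)‖ := by
    intro Δ hΔ
    have := norm_sub_norm_le (Complex.exp (-(Complex.I * (Δ : ℂ) * ζ)))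
      (Complex.exp (Complex.I * (Δ : ℂ) * ζ))
    have hle : Real.exp (-(Δ * ζ.im)) ≤ 1 := Real.exp_le_one_iff.mpr (by nlinarith)
    rw [habs1, habs2] at this
    linarith
  have hδbound : ∀ (Δ : ℝ), 0 < Δ → Δ₁ ≤ Δ →
      ‖(Complex.exp (Complex.I * (Δ₂ : ℂ) * ζ)
          - Complex.exp (Complex.I * (Δ₁ : ℂ) * ζ)) /
        (Complex.exp (-(Complex.I * (Δ : ℂ) * ζ))
          - Complex.exp (Complex.I * (Δ : ℂ) * ζ))‖ ≤ 2 / (E - 1) := by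
    intro Δ hΔpos hΔle
    rw [norm_div]
    have hEΔ : E - 1 ≤ Real.exp (Δ * ζ.im) - 1 := by
      have h1 : Δ₁ * ζ.im ≤ Δ * ζ.im := by nlinarith
      have := Real.exp_le_exp.mpr h1
      linarith
    have hd := hden Δ hΔpos
    exact div_le_div₀ (by norm_num) hnum (by linarith) (le_trans hEΔ hd)
  have hb1 : ‖δ₁‖ ≤ 2 / (E - 1) := by rw [hδ₁]; exact hδbound Δ₁ hΔ1pos le_rfl
  have hb2 : ‖δ₂‖ ≤ 2 / (E - 1) := by rw [hδ₂]; exact hδbound Δ₂ hΔ2pos hΔ12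
  have hb1' : ‖δ₁‖ ≤ 1 := hb1.trans (by rw [div_le_one (by linarith)]; linarith)
  have hD : ‖δ₂ - δ₁ - δ₁ * δ₂‖ ≤ 6 / (E - 1) := by
    have t1 : ‖δ₂ - δ₁ - δ₁ * δ₂‖ ≤
        ‖δ₂ - δ₁‖ + ‖δ₁ * δ₂‖ := norm_sub_le _ _
    have t2 : ‖δ₂ - δ₁‖ ≤ ‖δ₂‖ + ‖δ₁‖ :=
      norm_sub_le _ _
    have t3 : ‖δ₁ * δ₂‖ = ‖δ₁‖ * ‖δ₂‖ := norm_mul _ _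
    have t4 : ‖δ₁‖ * ‖δ₂‖ ≤ 1 * (2 / (E - 1)) :=
      mul_le_mul hb1' hb2 (norm_nonneg _) zero_le_one
    have : 2 / (E - 1) + 2 / (E - 1) + 2 / (E - 1) = 6 / (E - 1) := by ring
    nlinarith [hb1, hb2]
  have hdiff : χhat - (χ : ℂ) =
      4 * (δ₂ - δ₁ - δ₁ * δ₂) * (α : ℂ) ^ 2 * (Δ₁ : ℂ) * (Δ₂ : ℂ) / (χ : ℂ) := by
    rw [hχhat]; ring
  rw [hdiff]
  rw [norm_div, norm_mul, norm_mul, norm_mul, norm_mul, norm_pow]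
  simp only [Complex.norm_real, Real.norm_eq_abs]
  rw [abs_of_nonneg (le_of_lt hΔ1pos), abs_of_nonneg (le_of_lt hΔ2pos),
    abs_of_nonneg (le_of_lt hχpos)]
  have hαχ : |α| ^ 2 ≤ χ := by
    rw [sq_abs, hχ]; nlinarith
  have hEpos : (0:ℝ) < E - 1 := by linarith
  rw [div_le_div_iff₀ hχpos hEpos]
  have hDnn : 0 ≤ ‖δ₂ - δ₁ - δ₁ * δ₂‖ := norm_nonneg _
  have key : ‖δ₂ - δ₁ - δ₁ * δ₂‖ * (E - 1) ≤ 6 := by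
    calc ‖δ₂ - δ₁ - δ₁ * δ₂‖ * (E - 1) ≤ (6 / (E-1)) * (E-1) :=
          mul_le_mul_of_nonneg_right hD (le_of_lt hEpos)
      _ = 6 := by field_simp
  have step : ‖δ₂ - δ₁ - δ₁ * δ₂‖ * (E - 1) * (|α| ^ 2 * (Δ₁ * Δ₂))
      ≤ 6 * (χ * (Δ₁ * Δ₂)) := by
    apply mul_le_mul key (mul_le_mul_of_nonneg_right hαχ (by positivity)) (by positivity)
      (by norm_num)
  have h4 : ‖(4:ℂ)‖ = (4:ℝ) := by
    norm_num
  rw [h4]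
  nlinarith [step]
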